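/- In the majority model on the torus T_{n,n} with von Neumann neighborhood and random initial coloring with blue-probability p_b = o(n^{-1/2}), with probability 1 - o(1) the process reaches the all-red configuration within 2 steps. -/

import Mathlib

open Filter

/-- Number of blue cells among the four von Neumann neighbors of `v` in the torus. -/
def vnCount (n : ℕ) (g : ZMod n × ZMod n → Bool) (v : ZMod n × ZMod n) : ℕ :=
  (if g (v.1 + 1, v.2) = true then 1 else 0) + (if g (v.1 - 1, v.2) = true then 1 else 0) +
    (if g (v.1, v.2 + 1) = true then 1 else 0) + (if g (v.1, v.2 - 1) = true then 1 else 0)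

/-- One synchronous step of the majority model on the torus `T_{n,n}` with von Neumann
neighborhood: strict majority among the 4 neighbors, ties conserve the current color. -/
def torusMajStep (n : ℕ) (g : ZMod n × ZMod n → Bool) : ZMod n × ZMod n → Bool :=
  fun v => if 2 < vnCount n g v then true else if vnCount n g v < 2 then false else g v

/-- One synchronous step of the biased majority model on the torus `T_{n,n}` with
von Neumann neighborhood: a cell becomes blue iff at least 2 of its 4 neighbors are blue. -/
def torusBMajStep (n : ℕ) (g : ZMod n × ZMod n → Bool) : ZMod n × ZMod n → Bool :=
  fun v => decide (2 ≤ vnCount n g v)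

/-- Moore (8-)adjacency on the torus `T_{n,n}`. -/
def mooreAdj (n : ℕ) (u v : ZMod n × ZMod n) : Prop :=
  u ≠ v ∧ (u.1 = v.1 ∨ u.1 = v.1 + 1 ∨ v.1 = u.1 + 1) ∧
    (u.2 = v.2 ∨ u.2 = v.2 + 1 ∨ v.2 = u.2 + 1)

/-- The Moore (8-)adjacency graph on the torus `T_{n,n}`. -/
def mooreGraph (n : ℕ) : SimpleGraph (ZMod n × ZMod n) where
  Adj := mooreAdj n
  symm := by
    constructor
    rintro u v ⟨h0, h1, h2⟩
    exact ⟨Ne.symm h0, by tauto, by tauto⟩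
  loopless := ⟨fun v h => h.1 rfl⟩

open scoped Classical in
/-- Probability, under the product measure where each vertex is blue (`true`)
independently with probability `p`, of the event `E`. -/
noncomputable def pr {α : Type*} [Fintype α] [DecidableEq α] (p : ℝ)
    (E : (α → Bool) → Prop) : ℝ :=
  ∑ g : α → Bool, if E g then (∏ v, if g v = true then p else 1 - p) else 0

section PrLemmas
open scoped Classical
variable {α : Type*} [Fintype α] [DecidableEq α] {p : ℝ}

noncomputable def wgt (p : ℝ) (g : α → Bool) : ℝ := ∏ v, if g v = true then p else 1 - p

lemma wgt_nonneg (h0 : 0 ≤ p) (h1 : p ≤ 1) (g : α → Bool) : 0 ≤ wgt p g :=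
  Finset.prod_nonneg fun v _ => by split <;> linarith

lemma pr_def (E : (α → Bool) → Prop) : pr p E = ∑ g : α → Bool, if E g then wgt p g else 0 := rfl

lemma sum_factor (f : α → Bool → ℝ) :
    ∑ g : α → Bool, ∏ v, f v (g v) = ∏ v, (f v true + f v false) := by
  rw [show (Finset.univ : Finset (α → Bool)) = Fintype.piFinset (fun _ : α => (Finset.univ : Finset Bool)) from (Fintype.piFinset_univ).symm]
  rw [← Finset.prod_univ_sum]
  simp [Fintype.sum_bool]

lemma sum_wgt : ∑ g : α → Bool, wgt p g = 1 := by
  have h := sum_factor (α := α) (fun _ b => if b = true then p else 1 - p)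
  simp only [if_pos rfl] at h
  rw [show (fun g : α → Bool => wgt p g) = fun g : α → Bool => ∏ v, if g v = true then p else 1 - p from rfl, h]
  norm_num

lemma pr_nonneg (h0 : 0 ≤ p) (h1 : p ≤ 1) (E : (α → Bool) → Prop) : 0 ≤ pr p E := by
  rw [pr_def]
  refine Finset.sum_nonneg fun g _ => ?_
  split
  · exact wgt_nonneg h0 h1 g
  · exact le_refl _

lemma pr_mono {E F : (α → Bool) → Prop} (h0 : 0 ≤ p) (h1 : p ≤ 1)
    (h : ∀ g, E g → F g) : pr p E ≤ pr p F := by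
  rw [pr_def, pr_def]
  refine Finset.sum_le_sum fun g _ => ?_
  by_cases hE : E g
  · rw [if_pos hE, if_pos (h g hE)]
  · rw [if_neg hE]
    split
    · exact wgt_nonneg h0 h1 g
    · exact le_refl _

lemma pr_true : pr p (fun _ : α → Bool => True) = 1 := by
  rw [pr_def]; simp [sum_wgt]

lemma pr_le_one (h0 : 0 ≤ p) (h1 : p ≤ 1) (E : (α → Bool) → Prop) : pr p E ≤ 1 := by
  rw [← pr_true (α := α) (p := p)]
  exact pr_mono h0 h1 fun g _ => trivial

lemma pr_compl (E : (α → Bool) → Prop) : pr p (fun g => ¬ E g) = 1 - pr p E := by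
  have : pr p E + pr p (fun g => ¬ E g) = 1 := by
    rw [pr_def, pr_def, ← Finset.sum_add_distrib]
    rw [← sum_wgt (α := α) (p := p)]
    refine Finset.sum_congr rfl fun g _ => ?_
    by_cases hE : E g <;> simp [hE]
  linarith

lemma pr_union {ι : Type*} (h0 : 0 ≤ p) (h1 : p ≤ 1) (s : Finset ι)
    (E : ι → (α → Bool) → Prop) :
    pr p (fun g => ∃ i ∈ s, E i g) ≤ ∑ i ∈ s, pr p (E i) := by
  classical
  induction s using Finset.induction with
  | empty => simp [pr_def]
  | @insert a s ha ih =>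
    rw [Finset.sum_insert ha]
    have step : pr p (fun g => ∃ i ∈ insert a s, E i g)
        ≤ pr p (E a) + pr p (fun g => ∃ i ∈ s, E i g) := by
      rw [pr_def, pr_def, pr_def, ← Finset.sum_add_distrib]
      refine Finset.sum_le_sum fun g _ => ?_
      by_cases hA : E a g
      · have hI : ∃ i ∈ insert a s, E i g := ⟨a, Finset.mem_insert_self a s, hA⟩
        rw [if_pos hI, if_pos hA]
        by_cases hS : ∃ i ∈ s, E i g
        · rw [if_pos hS]; linarith [wgt_nonneg h0 h1 g]
        · rw [if_neg hS, add_zero]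
      · by_cases hS : ∃ i ∈ s, E i g
        · have : ∃ i ∈ insert a s, E i g := by
            obtain ⟨i, hi, hEi⟩ := hS; exact ⟨i, Finset.mem_insert_of_mem hi, hEi⟩
          simp only [if_pos this, if_neg hA, if_pos hS, zero_add]
          exact le_refl _
        · have : ¬ ∃ i ∈ insert a s, E i g := by
            rintro ⟨i, hi, hEi⟩
            rcases Finset.mem_insert.mp hi with rfl | hi
            · exact hA hEi
            · exact hS ⟨i, hi, hEi⟩
          simp only [if_neg this, if_neg hA, if_neg hS, add_zero, le_refl]
    exact step.trans (by linarith [ih])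

lemma pr_all_blue (h0 : 0 ≤ p) (h1 : p ≤ 1) (T : Finset α) :
    pr p (fun g => ∀ v ∈ T, g v = true) = p ^ T.card := by
  rw [pr_def]
  have key : ∀ g : α → Bool,
      (@ite ℝ (∀ v ∈ T, g v = true) (Classical.propDecidable _) (wgt p g) 0)
        = ∏ v, (fun v b => if v ∈ T then (if b = true then p else 0)
            else (if b = true then p else 1 - p)) v (g v) := by
    intro g
    by_cases hT : ∀ v ∈ T, g v = true
    · rw [if_pos hT]
      refine Finset.prod_congr rfl fun v _ => ?_
      by_cases hv : v ∈ T
      · simp [hv, hT v hv]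
      · simp [hv]
    · rw [if_neg hT]
      push_neg at hT
      obtain ⟨v₀, hv₀, hg⟩ := hT
      refine (Finset.prod_eq_zero (Finset.mem_univ v₀) ?_).symm
      simp only [hv₀, if_pos]
      rw [if_neg hg]
  refine Eq.trans (Finset.sum_congr rfl fun g _ => key g) ?_
  rw [sum_factor (fun v b => if v ∈ T then (if b = true then p else 0)
            else (if b = true then p else 1 - p))]
  have h2 : ∀ v : α, ((if v ∈ T then (if (true : Bool) = true then p else 0)
        else (if (true : Bool) = true then p else 1 - p))
      + (if v ∈ T then (if (false : Bool) = true then p else 0)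
        else (if (false : Bool) = true then p else 1 - p))) = (if v ∈ T then p else 1) := by
    intro v; by_cases hv : v ∈ T <;> simp [hv]
  rw [Finset.prod_congr rfl fun v _ => h2 v, Finset.prod_ite_mem, Finset.univ_inter,
    Finset.prod_const]


end PrLemmas

section Det
variable {m : ℕ}

/-- cast an integer point into the torus -/
def cst (m : ℕ) (a : ℤ × ℤ) : ZMod m × ZMod m := ((a.1 : ZMod m), (a.2 : ZMod m))

/-- the von Neumann neighbors of the origin, as integer points -/
def NZ : Finset (ℤ × ℤ) := {(1,0), (-1,0), (0,1), (0,-1)}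

/-- closed von Neumann ball of radius one, as integer points -/
def ballZ (a : ℤ × ℤ) : Finset (ℤ × ℤ) :=
  {a, (a.1 + 1, a.2), (a.1 - 1, a.2), (a.1, a.2 + 1), (a.1, a.2 - 1)}

/-- the window -/
noncomputable def W : Finset (ℤ × ℤ) := Finset.Icc (-2 : ℤ) 2 ×ˢ Finset.Icc (-2 : ℤ) 2

lemma ball_sub_W : ∀ u ∈ NZ, ∀ x ∈ ballZ u, x ∈ W := by decide

lemma pigeon : ∀ u1 ∈ NZ, ∀ u2 ∈ NZ, u1 ≠ u2 → ∀ x ∈ ballZ u2, ∀ y ∈ ballZ u2,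
    ∀ z ∈ ballZ u2, x ≠ y → x ≠ z → y ≠ z →
    x ∉ ballZ u1 ∨ y ∉ ballZ u1 ∨ z ∉ ballZ u1 := by decide

lemma cast_inj_small (hm : 5 ≤ m) {a b : ℤ} (ha : -2 ≤ a) (ha' : a ≤ 2) (hb : -2 ≤ b)
    (hb' : b ≤ 2) (h : (a : ZMod m) = b) : a = b := by
  have h2 := (ZMod.intCast_eq_intCast_iff _ _ _).mp h
  obtain ⟨k, hk⟩ := h2.dvd
  have hm' : (5 : ℤ) ≤ m := by exact_mod_cast hm
  rcases lt_trichotomy k 0 with hk0 | rfl | hk0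
  · nlinarith
  · omega
  · nlinarith

lemma cst_inj (hm : 5 ≤ m) {a b : ℤ × ℤ} (ha : a ∈ W) (hb : b ∈ W) (h : a ≠ b) :
    cst m a ≠ cst m b := by
  simp only [W, Finset.mem_product, Finset.mem_Icc] at ha hb
  intro hc
  apply h
  rw [Prod.ext_iff] at hc ⊢
  obtain ⟨h1, h2⟩ := hc
  exact ⟨cast_inj_small hm ha.1.1 ha.1.2 hb.1.1 hb.1.2 h1,
    cast_inj_small hm ha.2.1 ha.2.2 hb.2.1 hb.2.2 h2⟩

lemma vnCount_eq (g : ZMod m × ZMod m → Bool) (v : ZMod m × ZMod m) (a : ℤ × ℤ) :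
    vnCount m g (v + cst m a) =
      (if g (v + cst m (a.1 + 1, a.2)) = true then 1 else 0) +
        (if g (v + cst m (a.1 - 1, a.2)) = true then 1 else 0) +
        (if g (v + cst m (a.1, a.2 + 1)) = true then 1 else 0) +
        (if g (v + cst m (a.1, a.2 - 1)) = true then 1 else 0) := by
  have e1 : ((v + cst m a).1 + 1, (v + cst m a).2) = v + cst m (a.1 + 1, a.2) := by
    simp [cst, Prod.ext_iff]; push_cast; ring
  have e2 : ((v + cst m a).1 - 1, (v + cst m a).2) = v + cst m (a.1 - 1, a.2) := by
    simp [cst, Prod.ext_iff]; push_cast; ring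
  have e3 : ((v + cst m a).1, (v + cst m a).2 + 1) = v + cst m (a.1, a.2 + 1) := by
    simp [cst, Prod.ext_iff]; push_cast; ring
  have e4 : ((v + cst m a).1, (v + cst m a).2 - 1) = v + cst m (a.1, a.2 - 1) := by
    simp [cst, Prod.ext_iff]; push_cast; ring
  rw [vnCount, e1, e2, e3, e4]

lemma step_blue (g : ZMod m × ZMod m → Bool) (w : ZMod m × ZMod m)
    (h : torusMajStep m g w = true) :
    2 < vnCount m g w ∨ (vnCount m g w = 2 ∧ g w = true) := by
  unfold torusMajStep at h
  split at h
  · left; assumption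
  · split at h
    · exact absurd h (by simp)
    · right; exact ⟨by omega, h⟩

/-- the five points of the closed ball around `a`, indexed -/
def nb (a : ℤ × ℤ) : Fin 5 → ℤ × ℤ :=
  ![a, (a.1 + 1, a.2), (a.1 - 1, a.2), (a.1, a.2 + 1), (a.1, a.2 - 1)]

lemma nb_mem_ball (a : ℤ × ℤ) (i : Fin 5) : nb a i ∈ ballZ a := by
  fin_cases i <;> simp [nb, ballZ]

lemma nb_inj (a : ℤ × ℤ) {i j : Fin 5} (hij : i ≠ j) : nb a i ≠ nb a j := by
  fin_cases i <;> fin_cases j <;> simp_all [nb, Prod.ext_iff] <;> omega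

def cnt (b : Fin 5 → Bool) : ℕ :=
  (if b 1 = true then 1 else 0) + (if b 2 = true then 1 else 0) +
    (if b 3 = true then 1 else 0) + (if b 4 = true then 1 else 0)

lemma pick3 : ∀ b : Fin 5 → Bool, (2 < cnt b ∨ (cnt b = 2 ∧ b 0 = true)) →
    ∃ i j k : Fin 5, i ≠ j ∧ i ≠ k ∧ j ≠ k ∧ b i = true ∧ b j = true ∧ b k = true := by
  decide

lemma pick2 : ∀ b : Fin 5 → Bool, 2 ≤ cnt b →
    ∃ i j : Fin 5, i ≠ j ∧ i ≠ 0 ∧ j ≠ 0 ∧ b i = true ∧ b j = true := by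
  decide

lemma vnCount_eq_cnt (g : ZMod m × ZMod m → Bool) (v : ZMod m × ZMod m) (a : ℤ × ℤ) :
    vnCount m g (v + cst m a) = cnt (fun i => g (v + cst m (nb a i))) := by
  rw [vnCount_eq]
  rfl

lemma three_blues (g : ZMod m × ZMod m → Bool) (v : ZMod m × ZMod m) (a : ℤ × ℤ)
    (h : torusMajStep m g (v + cst m a) = true) :
    ∃ x y z : ℤ × ℤ, x ∈ ballZ a ∧ y ∈ ballZ a ∧ z ∈ ballZ a ∧ x ≠ y ∧ x ≠ z ∧ y ≠ z ∧
      g (v + cst m x) = true ∧ g (v + cst m y) = true ∧ g (v + cst m z) = true := by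
  have hcnt := step_blue g _ h
  rw [vnCount_eq_cnt] at hcnt
  obtain ⟨i, j, k, hij, hik, hjk, hi, hj, hk⟩ := pick3 _ hcnt
  exact ⟨nb a i, nb a j, nb a k, nb_mem_ball a i, nb_mem_ball a j, nb_mem_ball a k,
    nb_inj a hij, nb_inj a hik, nb_inj a hjk, hi, hj, hk⟩

lemma nb0_mem_NZ : ∀ i : Fin 5, i ≠ 0 → nb (0, 0) i ∈ NZ := by decide

lemma two_blues (g : ZMod m × ZMod m → Bool) (v : ZMod m × ZMod m)
    (h : torusMajStep m g v = true) :
    ∃ u1 u2 : ℤ × ℤ, u1 ∈ NZ ∧ u2 ∈ NZ ∧ u1 ≠ u2 ∧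
      g (v + cst m u1) = true ∧ g (v + cst m u2) = true := by
  have hv : v = v + cst m ((0 : ℤ), (0 : ℤ)) := by simp [cst]
  rw [hv] at h
  have hcnt := step_blue g _ h
  rw [vnCount_eq_cnt] at hcnt
  have h2 : 2 ≤ cnt (fun i => g (v + cst m (nb (0, 0) i))) := by
    rcases hcnt with hh | ⟨hh, _⟩ <;> omega
  obtain ⟨i, j, hij, hi0, hj0, hi, hj⟩ := pick2 _ h2
  exact ⟨nb (0,0) i, nb (0,0) j, nb0_mem_NZ i hi0, nb0_mem_NZ j hj0, nb_inj _ hij, hi, hj⟩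

lemma card4 {β : Type*} [DecidableEq β] {a b c d : β} (h12 : a ≠ b) (h13 : a ≠ c) (h14 : a ≠ d)
    (h23 : b ≠ c) (h24 : b ≠ d) (h34 : c ≠ d) : ({a, b, c, d} : Finset β).card = 4 := by
  rw [Finset.card_insert_of_notMem (by simp [h12, h13, h14]),
    Finset.card_insert_of_notMem (by simp [h23, h24]),
    Finset.card_insert_of_notMem (by simp [h34]), Finset.card_singleton]

lemma det (hm : 5 ≤ m) (g : ZMod m × ZMod m → Bool) (v : ZMod m × ZMod m)
    (hv : (torusMajStep m)^[2] g v = true) :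
    ∃ q : (ℤ×ℤ) × (ℤ×ℤ) × (ℤ×ℤ) × (ℤ×ℤ), (q.1 ∈ W ∧ q.2.1 ∈ W ∧ q.2.2.1 ∈ W ∧ q.2.2.2 ∈ W) ∧
      ({v + cst m q.1, v + cst m q.2.1, v + cst m q.2.2.1, v + cst m q.2.2.2} :
          Finset (ZMod m × ZMod m)).card = 4 ∧
      ∀ u ∈ ({v + cst m q.1, v + cst m q.2.1, v + cst m q.2.2.1, v + cst m q.2.2.2} :
          Finset (ZMod m × ZMod m)), g u = true := by
  rw [show (torusMajStep m)^[2] g = torusMajStep m (torusMajStep m g) from rfl] at hv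
  obtain ⟨u1, u2, hu1, hu2, hne, hb1, hb2⟩ := two_blues (torusMajStep m g) v hv
  obtain ⟨x1, y1, z1, hx1, hy1, hz1, hxy, hxz, hyz, gx1, gy1, gz1⟩ := three_blues g v u1 hb1
  obtain ⟨x2, y2, z2, hx2, hy2, hz2, d21, d22, d23, gx2, gy2, gz2⟩ := three_blues g v u2 hb2
  obtain ⟨t, ht2, htn, gt⟩ : ∃ t, t ∈ ballZ u2 ∧ t ∉ ballZ u1 ∧ g (v + cst m t) = true := by
    rcases pigeon u1 hu1 u2 hu2 hne x2 hx2 y2 hy2 z2 hz2 d21 d22 d23 with h | h | h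
    · exact ⟨x2, hx2, h, gx2⟩
    · exact ⟨y2, hy2, h, gy2⟩
    · exact ⟨z2, hz2, h, gz2⟩
  have hxt : x1 ≠ t := fun h => htn (h ▸ hx1)
  have hyt : y1 ≠ t := fun h => htn (h ▸ hy1)
  have hzt : z1 ≠ t := fun h => htn (h ▸ hz1)
  have wx1 : x1 ∈ W := ball_sub_W u1 hu1 x1 hx1
  have wy1 : y1 ∈ W := ball_sub_W u1 hu1 y1 hy1
  have wz1 : z1 ∈ W := ball_sub_W u1 hu1 z1 hz1
  have wt : t ∈ W := ball_sub_W u2 hu2 t ht2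
  have inj : ∀ {a b : ℤ × ℤ}, a ∈ W → b ∈ W → a ≠ b → v + cst m a ≠ v + cst m b :=
    fun ha hb hab h => cst_inj hm ha hb hab (add_right_injective v h)
  refine ⟨(x1, y1, z1, t), ⟨wx1, wy1, wz1, wt⟩,
    card4 (inj wx1 wy1 hxy) (inj wx1 wz1 hxz) (inj wx1 wt hxt)
      (inj wy1 wz1 hyz) (inj wy1 wt hyt) (inj wz1 wt hzt), ?_⟩
  intro u hu
  simp only [Finset.mem_insert, Finset.mem_singleton] at hu
  rcases hu with rfl | rfl | rfl | rfl <;> assumption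
end Det



section Main
open scoped Classical

lemma main_bound {m : ℕ} [NeZero m] (hm : 5 ≤ m) {pp : ℝ} (h0 : 0 ≤ pp) (h1 : pp ≤ 1) :
    1 - (m : ℝ) ^ 2 * 390625 * pp ^ 4 ≤
      pr (α := ZMod m × ZMod m) pp (fun g => ∀ v, (torusMajStep m)^[2] g v = false) := by
  set Q : Finset ((ℤ×ℤ) × (ℤ×ℤ) × (ℤ×ℤ) × (ℤ×ℤ)) := W ×ˢ W ×ˢ W ×ˢ W with hQ
  set S : (ZMod m × ZMod m) → ((ℤ×ℤ) × (ℤ×ℤ) × (ℤ×ℤ) × (ℤ×ℤ)) → Finset (ZMod m × ZMod m) :=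
    fun v q => {v + cst m q.1, v + cst m q.2.1, v + cst m q.2.2.1, v + cst m q.2.2.2} with hS
  set E : ((ZMod m × ZMod m) × ((ℤ×ℤ) × (ℤ×ℤ) × (ℤ×ℤ) × (ℤ×ℤ))) →
      ((ZMod m × ZMod m) → Bool) → Prop :=
    fun i g => (S i.1 i.2).card = 4 ∧ ∀ u ∈ S i.1 i.2, g u = true with hE
  have hEle : ∀ i, pr pp (E i) ≤ pp ^ 4 := by
    intro i
    by_cases hc : (S i.1 i.2).card = 4
    · calc pr pp (E i) ≤ pr pp (fun g => ∀ u ∈ S i.1 i.2, g u = true) :=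
            pr_mono h0 h1 fun g hg => hg.2
        _ = pp ^ (S i.1 i.2).card := pr_all_blue h0 h1 _
        _ = pp ^ 4 := by rw [hc]
    · have hle : pr pp (E i) ≤ pr pp (fun _ => False) :=
        pr_mono h0 h1 fun g hg => hc hg.1
      have hz : pr pp (fun _ : (ZMod m × ZMod m) → Bool => False) = 0 := by
        rw [pr_def]; simp
      rw [hz] at hle
      exact hle.trans (by positivity)
  have hWcard : W.card = 25 := by decide
  have hcard : ((Finset.univ ×ˢ Q : Finset (((ZMod m × ZMod m)) × _)).card : ℝ)
      = (m : ℝ) ^ 2 * 390625 := by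
    rw [Finset.card_product, Finset.card_univ, Fintype.card_prod, ZMod.card, hQ,
      Finset.card_product, Finset.card_product, Finset.card_product, hWcard]
    push_cast
    ring
  have hBad : pr pp (fun g => ∃ i ∈ Finset.univ ×ˢ Q, E i g) ≤ (m : ℝ) ^ 2 * 390625 * pp ^ 4 := by
    calc pr pp (fun g => ∃ i ∈ Finset.univ ×ˢ Q, E i g)
        ≤ ∑ i ∈ Finset.univ ×ˢ Q, pr pp (E i) := pr_union h0 h1 _ _
      _ ≤ (Finset.univ ×ˢ Q).card • pp ^ 4 :=
          Finset.sum_le_card_nsmul _ _ _ fun i _ => hEle i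
      _ = ((Finset.univ ×ˢ Q).card : ℝ) * pp ^ 4 := by rw [nsmul_eq_mul]
      _ = (m : ℝ) ^ 2 * 390625 * pp ^ 4 := by rw [hcard]
  have hcontra : ∀ g : (ZMod m × ZMod m) → Bool,
      ¬ (∃ i ∈ Finset.univ ×ˢ Q, E i g) → ∀ v, (torusMajStep m)^[2] g v = false := by
    intro g hg v
    by_contra hfalse
    have hvtrue : (torusMajStep m)^[2] g v = true := by
      cases h : (torusMajStep m)^[2] g v
      · exact absurd h hfalse
      · rfl
    obtain ⟨q, ⟨w1, w2, w3, w4⟩, hc4, hblue⟩ := det hm g v hvtrue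
    exact hg ⟨(v, q), Finset.mem_product.mpr ⟨Finset.mem_univ v, by
      rw [hQ]
      exact Finset.mem_product.mpr ⟨w1, Finset.mem_product.mpr ⟨w2,
        Finset.mem_product.mpr ⟨w3, w4⟩⟩⟩⟩, hc4, hblue⟩
  calc 1 - (m : ℝ) ^ 2 * 390625 * pp ^ 4
      ≤ 1 - pr pp (fun g => ∃ i ∈ Finset.univ ×ˢ Q, E i g) := by linarith
    _ = pr pp (fun g => ¬ ∃ i ∈ Finset.univ ×ˢ Q, E i g) := (pr_compl _).symm
    _ ≤ pr pp (fun g => ∀ v, (torusMajStep m)^[2] g v = false) :=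
        pr_mono h0 h1 hcontra

end Main

/-- Majority model on the torus with von Neumann neighborhood: if `p_b = o(n^{-1/2})`,
then w.h.p. the process reaches the all-red configuration within 2 steps. -/
theorem stmt12 (p : ℕ → ℝ) (hp0 : ∀ n, 0 ≤ p n) (hp1 : ∀ n, p n ≤ 1)
    (hsmall : Tendsto (fun n : ℕ => p n * Real.sqrt (n + 1)) atTop (nhds 0)) :
    Tendsto (fun n : ℕ =>
        pr (α := ZMod (n + 1) × ZMod (n + 1)) (p n)
          (fun g => ∀ v, (torusMajStep (n + 1))^[2] g v = false))
      atTop (nhds 1) := by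
  have h4 : Tendsto (fun n : ℕ => (p n * Real.sqrt (n + 1)) ^ 4) atTop (nhds 0) := by
    have := hsmall.pow 4
    simpa using this
  have hf : Tendsto (fun n : ℕ => 1 - ((n + 1 : ℕ) : ℝ) ^ 2 * 390625 * (p n) ^ 4)
      atTop (nhds 1) := by
    have heq : ∀ n : ℕ, ((n + 1 : ℕ) : ℝ) ^ 2 * 390625 * (p n) ^ 4
        = 390625 * (p n * Real.sqrt (n + 1)) ^ 4 := by
      intro n
      have hs : Real.sqrt ((n : ℝ) + 1) ^ 2 = (n : ℝ) + 1 := Real.sq_sqrt (by positivity)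
      rw [mul_pow, show (Real.sqrt ((n : ℝ) + 1)) ^ 4
        = ((Real.sqrt ((n : ℝ) + 1)) ^ 2) ^ 2 by ring, hs]
      push_cast
      ring
    simp only [heq]
    have := (h4.const_mul (390625 : ℝ))
    have h2 : Tendsto (fun n : ℕ => 1 - 390625 * (p n * Real.sqrt (n + 1)) ^ 4)
        atTop (nhds (1 - 390625 * 0)) := tendsto_const_nhds.sub this
    simpa using h2
  refine tendsto_of_tendsto_of_tendsto_of_le_of_le' hf tendsto_const_nhds ?_ ?_
  · filter_upwards [eventually_ge_atTop 4] with n hn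
    exact main_bound (m := n + 1) (by omega) (hp0 n) (hp1 n)
  · filter_upwards with n
    exact pr_le_one (hp0 n) (hp1 n) _
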